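/- Let a^ν_{jk}(τ) = iτ(2^ν − 2j) 1_{[2^{ν−1}, 2^ν)}(j) / [((j+1/2)² + 2iτ(j+1/2) − τ² + λ_k)((j+1/2)² + i(2^ν+1)τ − τ² + λ_k)]. Then for m ≤ √(j² + λ_k) < m+1 with 2^{ν−1} ≤ j < 2^ν, one has |a^ν_{jk}(τ)| ≤ C · 2^ν |τ| / ((m² − τ²)² + 4^{ν+1} τ²) with C an absolute constant. -/

import Mathlib

set_option maxHeartbeats 1000000


set_option maxHeartbeats 1000000 in
private lemma coeff_aux (M x b d t : ℝ) (hM : 1 ≤ M) (hd1 : 0 ≤ d) (hd2 : d ≤ 6*M)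
    (h4 : t ≤ 4*b^2) (hcase : M^2 ≤ 2*b^2 ∨ M^2/2 ≤ x) :
    (x - d)^2 + t ≤ 300*(x^2 + b^2) := by
  have hmsq : M^2 ≤ 4*(x^2 + b^2) := by
    rcases hcase with h | h
    · nlinarith [sq_nonneg x, sq_nonneg b]
    · nlinarith [sq_nonneg b, sq_nonneg (M - 1), sq_nonneg (M + 1), sq_nonneg (x - M^2/2)]
  have hdsq : d^2 ≤ 36*M^2 := by nlinarith
  nlinarith [sq_nonneg (x + d), sq_nonneg x, sq_nonneg b]

/-- Bound for the coefficients `a^ν_{jk}(τ)`: there is an absolute constant `C` such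
that for `ν ≥ 1`, `2^{ν-1} ≤ j < 2^ν`, `λ_k ≥ 0`, `|τ| ≥ 1` and
`m ≤ √(j² + λ_k) < m + 1`, one has
`|τ(2^ν - 2j)| / (|(j+1/2)² + 2iτ(j+1/2) - τ² + λ_k| ⬝ |(j+1/2)² + i(2^ν+1)τ - τ² + λ_k|)`
`≤ C 2^ν |τ| / ((m² - τ²)² + 4^{ν+1} τ²)`. -/
theorem coefficient_bound :
    ∃ C : ℝ, 0 < C ∧ ∀ (ν : ℕ), 1 ≤ ν → ∀ (j : ℤ) (lam τ : ℝ) (m : ℕ),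
      (2:ℤ) ^ (ν - 1) ≤ j → j < (2:ℤ) ^ ν → 0 ≤ lam → 1 ≤ |τ| →
      ((m : ℝ) ^ 2 ≤ (j : ℝ) ^ 2 + lam) → ((j : ℝ) ^ 2 + lam < ((m : ℝ) + 1) ^ 2) →
      ‖(τ : ℂ) * ((2:ℂ) ^ ν - 2 * (j : ℂ))‖
          / (‖((j : ℂ) + 1/2) ^ 2 + 2 * Complex.I * τ * ((j : ℂ) + 1/2)
                - (τ : ℂ) ^ 2 + (lam : ℂ)‖
            * ‖((j : ℂ) + 1/2) ^ 2 + Complex.I * ((2:ℂ) ^ ν + 1) * τ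
                - (τ : ℂ) ^ 2 + (lam : ℂ)‖)
        ≤ C * 2 ^ ν * |τ| / (((m : ℝ) ^ 2 - τ ^ 2) ^ 2 + 4 ^ (ν + 1) * τ ^ 2) := by
  refine ⟨300, by norm_num, ?_⟩
  intro ν hν j lam τ m hj1 hj2 hlam hτ hm1 hm2
  have hτ2 : (1:ℝ) ≤ τ^2 := by nlinarith [sq_abs τ, abs_nonneg τ]
  have hjr : (2:ℝ)^(ν-1) ≤ (j:ℝ) := by exact_mod_cast hj1
  have hjp : (j:ℝ) < (2:ℝ)^ν := by exact_mod_cast hj2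
  have hp2 : (2:ℝ)^ν = 2 * (2:ℝ)^(ν-1) := by
    rw [← pow_succ']
    congr 1
    omega
  have hone : (1:ℝ) ≤ (2:ℝ)^(ν-1) := by calc (1:ℝ) = 1^(ν-1) := (one_pow _).symm
    _ ≤ 2^(ν-1) := pow_le_pow_left₀ (by norm_num) (by norm_num) _
  have hj1' : (1:ℝ) ≤ (j:ℝ) := le_trans hone hjr
  have hpj : (2:ℝ)^ν ≤ 2*(j:ℝ) := by rw [hp2]; linarith
  have hjm : (j:ℝ) ≤ (m:ℝ) := by
    have h1 : (j:ℝ) < (m:ℝ) + 1 := by nlinarith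
    have h2 : j < (m:ℤ) + 1 := by exact_mod_cast h1
    exact_mod_cast Int.lt_add_one_iff.mp h2
  have hm1' : (1:ℝ) ≤ (m:ℝ) := le_trans hj1' hjm
  set a : ℝ := (j:ℝ) + 1/2 with ha
  set A : ℝ := a^2 + lam with hA
  clear_value a
  have ha32 : (3/2 : ℝ) ≤ a := by rw [ha]; linarith
  clear_value A
  have hAm : (m:ℝ)^2 ≤ A := by rw [hA, ha]; nlinarith
  have hδ1 : (j:ℝ) + 1/4 ≤ A - (m:ℝ)^2 := by rw [hA, ha]; nlinarith
  have hδ2 : A - (m:ℝ)^2 ≤ 6*(m:ℝ) := by rw [hA, ha]; nlinarith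
  have h42 : ((2:ℝ)^ν)^2 = (4:ℝ)^ν := by
    rw [← pow_mul, show (4:ℝ) = 2^2 by norm_num, ← pow_mul, mul_comm]
  have h4p : (4:ℝ)^(ν+1) = 4 * ((2:ℝ)^ν)^2 := by rw [h42, pow_succ]; ring
  -- key inequality for factor with imaginary part b, given b^2 lower bounds
  have key : ∀ b : ℝ, (2:ℝ)^ν * |τ| ≤ |b| → ((m:ℝ)^2 ≤ 2*b^2 ∨ τ^2 ≤ A/2) →
      ((m:ℝ)^2 - τ^2)^2 + 4^(ν+1)*τ^2 ≤ 300 * ((A - τ^2)^2 + b^2) := by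
    intro b hb hcase
    have hb2 : ((2:ℝ)^ν)^2 * τ^2 ≤ b^2 := by
      have h := mul_self_le_mul_self (by positivity) hb
      calc ((2:ℝ)^ν)^2 * τ^2 = ((2:ℝ)^ν * |τ|) * ((2:ℝ)^ν * |τ|) := by
            rw [← sq_abs τ]; ring
        _ ≤ |b| * |b| := h
        _ = b^2 := by rw [← sq_abs b]; ring
    have h4 : (4:ℝ)^(ν+1)*τ^2 ≤ 4 * b^2 := by rw [h4p]; nlinarith
    have hcase' : (m:ℝ)^2 ≤ 2*b^2 ∨ (m:ℝ)^2/2 ≤ A - τ^2 := by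
      rcases hcase with h | h
      · exact Or.inl h
      · exact Or.inr (by linarith)
    have := coeff_aux (m:ℝ) (A - τ^2) b (A - (m:ℝ)^2) ((4:ℝ)^(ν+1)*τ^2)
      hm1' (by linarith) hδ2 h4 hcase'
    calc ((m:ℝ)^2 - τ^2)^2 + 4^(ν+1)*τ^2
        = ((A - τ^2) - (A - (m:ℝ)^2))^2 + (4:ℝ)^(ν+1)*τ^2 := by ring_nf
      _ ≤ 300 * ((A - τ^2)^2 + b^2) := this
  -- the two factors
  set b1 : ℝ := 2*τ*a with hb1
  set b2 : ℝ := ((2:ℝ)^ν + 1)*τ with hb2def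
  clear_value b1 b2
  have hcase1 : (m:ℝ)^2 ≤ 2*b1^2 ∨ τ^2 ≤ A/2 := by
    rcases le_or_gt (τ^2) (A/2) with h | h
    · exact Or.inr h
    · left
      have hA0 : (0:ℝ) ≤ A := le_trans (sq_nonneg _) hAm
      have ha2 : (9/4:ℝ) ≤ a^2 := by nlinarith [ha32]
      rw [hb1]
      nlinarith [mul_nonneg (sq_nonneg a) (by linarith : (0:ℝ) ≤ τ^2 - A/2),
        mul_nonneg hA0 (by linarith : (0:ℝ) ≤ a^2 - 9/4), hAm, sq_nonneg (m:ℝ)]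
  have hcase2 : (m:ℝ)^2 ≤ 2*b2^2 ∨ τ^2 ≤ A/2 := by
    rcases le_or_gt (τ^2) (A/2) with h | h
    · exact Or.inr h
    · left
      have hp1 : (1:ℝ) ≤ (2:ℝ)^ν := le_trans hone (by rw [hp2]; linarith)
      have hA0 : (0:ℝ) ≤ A := le_trans (sq_nonneg _) hAm
      rw [hb2def]
      nlinarith [mul_nonneg (mul_nonneg (by positivity : (0:ℝ) ≤ (2:ℝ)^ν) (by positivity : (0:ℝ) ≤ (2:ℝ)^ν)) (by linarith : (0:ℝ) ≤ τ^2 - A/2),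
        sq_nonneg ((2:ℝ)^ν - 1), sq_nonneg ((2:ℝ)^ν + 1), hAm, sq_nonneg (m:ℝ), hA0]
  have hble1 : (2:ℝ)^ν * |τ| ≤ |b1| := by
    rw [hb1, abs_mul, abs_mul]
    have : |(2:ℝ)| * |τ| * |a| = 2 * |a| * |τ| := by rw [abs_two]; ring
    rw [this]
    have haabs : |a| = a := abs_of_nonneg (le_trans (by norm_num : (0:ℝ) ≤ 3/2) ha32)
    rw [haabs]
    have : (2:ℝ)^ν ≤ 2*a := by rw [ha]; linarith
    nlinarith [abs_nonneg τ]
  have hble2 : (2:ℝ)^ν * |τ| ≤ |b2| := by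
    rw [hb2def, abs_mul]
    have hpos : (0:ℝ) < (2:ℝ)^ν := by positivity
    rw [abs_of_nonneg (by linarith : (0:ℝ) ≤ (2:ℝ)^ν + 1)]
    nlinarith [abs_nonneg τ]
  have key1 := key b1 hble1 hcase1
  have key2 := key b2 hble2 hcase2
  -- rewrite the complex absolute values
  have hD1 : ((j:ℂ) + 1/2)^2 + 2*Complex.I*τ*((j:ℂ)+1/2) - (τ:ℂ)^2 + (lam:ℂ)
      = ((A - τ^2 : ℝ) : ℂ) + ((b1 : ℝ) : ℂ) * Complex.I := by
    rw [hb1, hA, ha]; push_cast; ring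
  have hD2 : ((j:ℂ) + 1/2)^2 + Complex.I*((2:ℂ)^ν + 1)*τ - (τ:ℂ)^2 + (lam:ℂ)
      = ((A - τ^2 : ℝ) : ℂ) + ((b2 : ℝ) : ℂ) * Complex.I := by
    rw [hb2def, hA, ha]; push_cast; ring
  have hN : (τ:ℂ) * ((2:ℂ)^ν - 2*(j:ℂ)) = ((τ * ((2:ℝ)^ν - 2*(j:ℝ)) : ℝ) : ℂ) := by
    push_cast; ring
  rw [hD1, hD2, hN, Complex.norm_real, Real.norm_eq_abs, Complex.norm_add_mul_I, Complex.norm_add_mul_I]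
  set E1 : ℝ := (A - τ^2)^2 + b1^2 with hE1
  set E2 : ℝ := (A - τ^2)^2 + b2^2 with hE2
  set S : ℝ := ((m:ℝ)^2 - τ^2)^2 + 4^(ν+1)*τ^2 with hS
  clear_value E1 E2 S
  have hτne : τ ≠ 0 := by intro h; rw [h, abs_zero] at hτ; linarith
  have hE1pos : 0 < E1 := by
    have hne : b1 ≠ 0 := by
      rw [hb1]
      have hapos : (0:ℝ) < a := by linarith
      exact mul_ne_zero (mul_ne_zero two_ne_zero hτne) hapos.ne'
    have hb1sq : 0 < b1^2 := by
      rw [← sq_abs]; exact pow_pos (abs_pos.mpr hne) 2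
    rw [hE1]
    linarith [sq_nonneg (A - τ^2)]
  have hE2pos : 0 < E2 := by
    have hpos : (0:ℝ) < (2:ℝ)^ν := by positivity
    have hne : b2 ≠ 0 := by
      rw [hb2def]
      exact mul_ne_zero (by linarith) hτne
    have hb2sq : 0 < b2^2 := by
      rw [← sq_abs]; exact pow_pos (abs_pos.mpr hne) 2
    rw [hE2]
    linarith [sq_nonneg (A - τ^2)]
  have hSpos : 0 < S := by
    rw [hS]
    have h0 : (0:ℝ) < 4^(ν+1)*τ^2 := by positivity
    linarith [sq_nonneg ((m:ℝ)^2 - τ^2)]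
  have hPpos : 0 < Real.sqrt E1 * Real.sqrt E2 :=
    mul_pos (Real.sqrt_pos.mpr hE1pos) (Real.sqrt_pos.mpr hE2pos)
  have hSP : S ≤ 300 * (Real.sqrt E1 * Real.sqrt E2) := by
    have h1 : S/300 ≤ E1 := by linarith
    have h2 : S/300 ≤ E2 := by linarith
    have hS0 : 0 ≤ S/300 := by positivity
    have hq : (S/300)^2 ≤ E1 * E2 := by
      calc (S/300)^2 = (S/300)*(S/300) := sq (S/300) ▸ by ring
        _ ≤ E1 * E2 := mul_le_mul h1 h2 hS0 (le_of_lt hE1pos)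
    have := Real.sqrt_le_sqrt hq
    rw [Real.sqrt_sq (by positivity), Real.sqrt_mul (le_of_lt hE1pos)] at this
    linarith
  rw [div_le_div_iff₀ hPpos hSpos]
  have hNle : |τ * ((2:ℝ)^ν - 2*(j:ℝ))| ≤ |τ| * (2:ℝ)^ν := by
    rw [abs_mul]
    have : |(2:ℝ)^ν - 2*(j:ℝ)| ≤ (2:ℝ)^ν := by
      rw [abs_le]; constructor <;> linarith
    exact mul_le_mul_of_nonneg_left this (abs_nonneg τ)
  calc |τ * ((2:ℝ)^ν - 2*(j:ℝ))| * S ≤ (|τ| * (2:ℝ)^ν) * (300 * (Real.sqrt E1 * Real.sqrt E2)) := by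
        apply mul_le_mul hNle hSP (le_of_lt hSpos) (by positivity)
    _ = 300 * 2^ν * |τ| * (Real.sqrt E1 * Real.sqrt E2) := by ring
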